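/- For each regular uncountable cardinal κ and each positive integer n, there exists an atomistic join-semilattice L with zero, of breadth exactly n+1 and cardinality κ⁺ⁿ, such that every principal ideal of L has fewer than κ elements. -/

import Mathlib

open Cardinal Set

namespace Stmt8

variable {E : Type} (g : Finset E → Set E)

/-- iterated closure -/
def iterCl (S : Set E) : ℕ → Set E
  | 0 => S
  | k+1 => iterCl S k ∪ ⋃ (U : {U : Finset E // ↑U ⊆ iterCl S k}), g U.1

def clos (S : Set E) : Set E := ⋃ k, iterCl g S k

theorem iterCl_mono (S : Set E) : Monotone (iterCl g S) := by
  apply monotone_nat_of_le_succ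
  intro k
  exact Set.subset_union_left

theorem subset_clos (S : Set E) : S ⊆ clos g S :=
  Set.subset_iUnion (iterCl g S) 0

theorem clos_mono {S T : Set E} (h : S ⊆ T) : clos g S ⊆ clos g T := by
  apply Set.iUnion_subset
  intro k
  refine Set.Subset.trans ?_ (Set.subset_iUnion (iterCl g T) k)
  induction k with
  | zero => exact h
  | succ k ih =>
    apply Set.union_subset (Set.Subset.trans ih Set.subset_union_left)
    apply Set.iUnion_subset
    rintro ⟨U, hU⟩
    refine Set.Subset.trans ?_ Set.subset_union_right
    exact Set.subset_iUnion_of_subset ⟨U, hU.trans ih⟩ subset_rfl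

theorem finset_subset_clos {S : Set E} {U : Finset E} (h : ↑U ⊆ clos g S) :
    ∃ k, ↑U ⊆ iterCl g S k := by
  classical
  have : ∀ x ∈ U, ∃ k, x ∈ iterCl g S k := by
    intro x hx
    exact Set.mem_iUnion.1 (h hx)
  choose f hf using this
  refine ⟨U.sup fun x => if hx : x ∈ U then f x hx else 0, ?_⟩
  intro x hx
  have hx' : x ∈ U := hx
  refine iterCl_mono g S ?_ (hf x hx')
  have := Finset.le_sup (f := fun x => if hx : x ∈ U then f x hx else 0) hx'
  simpa [hx'] using this

theorem clos_closed {S : Set E} {U : Finset E} (h : ↑U ⊆ clos g S) : g U ⊆ clos g S := by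
  obtain ⟨k, hk⟩ := finset_subset_clos g h
  refine Set.Subset.trans ?_ (Set.subset_iUnion (iterCl g S) (k+1))
  refine Set.Subset.trans ?_ Set.subset_union_right
  exact Set.subset_iUnion_of_subset (⟨U, hk⟩ : {U : Finset E // ↑U ⊆ iterCl g S k}) subset_rfl

theorem clos_min {S C : Set E} (hC : ∀ U : Finset E, ↑U ⊆ C → g U ⊆ C) (hSC : S ⊆ C) :
    clos g S ⊆ C := by
  apply Set.iUnion_subset
  intro k
  induction k with
  | zero => exact hSC
  | succ k ih =>
    apply Set.union_subset ih
    apply Set.iUnion_subset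
    rintro ⟨U, hU⟩
    exact hC U (hU.trans ih)

theorem clos_idem_union {A B : Set E} : clos g (clos g A ∪ clos g B) = clos g (A ∪ B) := by
  apply le_antisymm
  · apply clos_min
    · intro U hU
      exact clos_closed g hU
    · apply Set.union_subset
      · exact clos_mono g Set.subset_union_left
      · exact clos_mono g Set.subset_union_right
  · apply clos_mono
    exact Set.union_subset ((subset_clos g A).trans Set.subset_union_left)
      ((subset_clos g B).trans Set.subset_union_right)





theorem mk_finset_le' (T : Set E) : #{U : Finset E // ↑U ⊆ T} ≤ max #T ℵ₀ := by
  classical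
  have hinj : Function.Injective
      (fun U : {U : Finset E // ↑U ⊆ T} => U.1.subtype (· ∈ T)) := by
    rintro ⟨U, hU⟩ ⟨V, hV⟩ h
    simp only at h
    have hU' : U.filter (· ∈ T) = U := Finset.filter_true_of_mem (fun x hx => hU hx)
    have hV' : V.filter (· ∈ T) = V := Finset.filter_true_of_mem (fun x hx => hV hx)
    have := congrArg (fun s => s.map (Function.Embedding.subtype (· ∈ T))) h
    simp only [Finset.subtype_map] at this
    exact Subtype.ext (hU'.symm.trans (this.trans hV'))
  have h1 : #{U : Finset E // ↑U ⊆ T} ≤ #(Finset T) := mk_le_of_injective hinj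
  refine h1.trans ?_
  by_cases hT : Finite T
  · have := Fintype.ofFinite ↥T
    exact le_max_of_le_right (mk_le_aleph0)
  · have : Infinite T := not_finite_iff_infinite.1 hT
    rw [mk_finset_of_infinite]
    exact le_max_left _ _

theorem mk_iterCl_lt {κ : Cardinal} (hreg : κ.IsRegular) (hunc : ℵ₀ < κ)
    (hg : ∀ U, #(g U) < κ) {S : Set E} (hS : #S < κ) : ∀ k, #(iterCl g S k) < κ := by
  intro k
  induction k with
  | zero => exact hS
  | succ k ih =>
    rw [iterCl]
    refine lt_of_le_of_lt (mk_union_le _ _) (Cardinal.add_lt_of_lt hreg.aleph0_le ih ?_)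
    have hσ : #{U : Finset E // ↑U ⊆ iterCl g S k} < κ :=
      lt_of_le_of_lt (mk_finset_le' _) (max_lt ih hunc)
    exact (Cardinal.card_iUnion_lt_iff_forall_of_isRegular hreg hσ).2 fun U => hg U.1

theorem mk_clos_lt {κ : Cardinal} (hreg : κ.IsRegular) (hunc : ℵ₀ < κ)
    (hg : ∀ U, #(g U) < κ) {S : Set E} (hS : #S < κ) : #(clos g S) < κ := by
  rw [clos]
  refine (Cardinal.card_iUnion_lt_iff_forall_of_isRegular hreg ?_).2
    (mk_iterCl_lt g hreg hunc hg hS)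
  simpa using hunc

theorem mk_iterCl_le {μ : Cardinal} (hμ : ℵ₀ ≤ μ) (hg : ∀ U, #(g U) ≤ μ)
    {S : Set E} (hS : #S ≤ μ) : ∀ k, #(iterCl g S k) ≤ μ := by
  intro k
  induction k with
  | zero => exact hS
  | succ k ih =>
    rw [iterCl]
    refine le_trans (mk_union_le _ _) ?_
    have hσ : #{U : Finset E // ↑U ⊆ iterCl g S k} ≤ μ :=
      le_trans (mk_finset_le' _) (max_le ih hμ)
    have hU : #(⋃ (U : {U : Finset E // ↑U ⊆ iterCl g S k}), g U.1) ≤ μ := by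
      refine le_trans (mk_iUnion_le _) ?_
      by_cases hne : Nonempty {U : Finset E // ↑U ⊆ iterCl g S k}
      · refine le_trans (mul_le_mul' hσ (ciSup_le' fun U => hg U.1)) ?_
        rw [Cardinal.mul_eq_self hμ]
      · have : IsEmpty {U : Finset E // ↑U ⊆ iterCl g S k} := not_nonempty_iff.1 hne
        simp
    calc #(iterCl g S k) + _ ≤ μ + μ := add_le_add ih hU
    _ = μ := Cardinal.add_eq_self hμ

theorem mk_clos_le {μ : Cardinal} (hμ : ℵ₀ ≤ μ) (hg : ∀ U, #(g U) ≤ μ)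
    {S : Set E} (hS : #S ≤ μ) : #(clos g S) ≤ μ := by
  rw [clos]
  refine le_trans (mk_iUnion_le _) ?_
  refine le_trans (mul_le_mul' (mk_nat.le.trans hμ) (ciSup_le' (mk_iterCl_le g hμ hg hS))) ?_
  exact le_of_eq (Cardinal.mul_eq_self hμ)



abbrev OT (κ : Cardinal) (m : ℕ) : Type := ((Order.succ)^[m] κ).ord.ToType

theorem mk_OT (κ : Cardinal) (m : ℕ) : #(OT κ m) = (Order.succ)^[m] κ := by
  rw [OT, Cardinal.mk_toType, Cardinal.card_ord]

theorem kur (κ : Cardinal) (hreg : κ.IsRegular) (hunc : ℵ₀ < κ) (m : ℕ) :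
    ∃ f : Finset (OT κ m) → Set (OT κ m),
      (∀ U, #(f U) < κ) ∧
      (∀ W : Finset (OT κ m), W.card = m + 2 → ∃ ξ ∈ W, ξ ∈ f (W.erase ξ)) := by
  classical
  induction m with
  | zero =>
    refine ⟨fun U => ⋃ (u : {x // x ∈ U}), Set.Iio u.1, ?_, ?_⟩
    · intro U
      refine (Cardinal.card_iUnion_lt_iff_forall_of_isRegular hreg
        (lt_of_le_of_lt (mk_le_aleph0) hunc)).2 ?_
      intro u
      exact Cardinal.mk_Iio_ord_toType u.1
    · intro W hW
      have hne : W.Nonempty := Finset.card_pos.1 (by omega)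
      have h1 : 1 < W.card := by omega
      have hlt := Finset.min'_lt_max'_of_card W h1
      refine ⟨W.min' hne, Finset.min'_mem W hne, ?_⟩
      refine Set.mem_iUnion.2 ⟨⟨W.max' hne, ?_⟩, hlt⟩
      exact Finset.mem_erase.2 ⟨(ne_of_lt hlt).symm, Finset.max'_mem W hne⟩
  | succ m ih =>
    obtain ⟨f, hfcard, hfprop⟩ := ih
    -- injections from initial segments into OT κ m
    have hseg : ∀ β : OT κ (m+1), #(Set.Iio β) ≤ (Order.succ)^[m] κ := by
      intro β
      have h1 : #(Set.Iio β) < (Order.succ)^[m+1] κ := Cardinal.mk_Iio_ord_toType β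
      exact Order.lt_succ_iff.1
        (lt_of_lt_of_eq h1 (by rw [Function.iterate_succ_apply']))
    have hinj : ∀ β : OT κ (m+1), Nonempty (Set.Iio β ↪ OT κ m) := by
      intro β
      rw [← Cardinal.le_def]
      rw [mk_OT]
      exact hseg β
    have e : ∀ β : OT κ (m+1), (Set.Iio β ↪ OT κ m) := fun β => Classical.choice (hinj β)
    -- the function
    set g : Finset (OT κ (m+1)) → Set (OT κ (m+1)) := fun U =>
      if h : U.Nonempty then
        {x : OT κ (m+1) | ∃ hx : x < U.max' h,
          e (U.max' h) ⟨x, hx⟩ ∈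
            f (((U.erase (U.max' h)).subtype (· < U.max' h)).image (e (U.max' h)))}
      else ∅ with hg
    refine ⟨g, ?_, ?_⟩
    · intro U
      rw [hg]
      dsimp only
      by_cases h : U.Nonempty
      · rw [dif_pos h]
        set β := U.max' h
        set V := ((U.erase β).subtype (· < β)).image (e β)
        refine lt_of_le_of_lt (Cardinal.mk_le_of_injective
          (f := fun x : {x : OT κ (m+1) | ∃ hx : x < β, e β ⟨x, hx⟩ ∈ f V} =>
            (⟨e β ⟨x.1, x.2.choose⟩, x.2.choose_spec⟩ : f V)) ?_) (hfcard V)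
        rintro ⟨x, hx⟩ ⟨y, hy⟩ hxy
        simp only [Subtype.mk.injEq] at hxy
        have hxy2 : x = y := congrArg Subtype.val ((e β).injective hxy)
        exact Subtype.ext hxy2
      · rw [dif_neg h]
        simpa using aleph0_pos.trans hunc
    · intro W hW
      have hWne : W.Nonempty := Finset.card_pos.1 (by omega)
      set β := W.max' hWne with hβ
      have hβW : β ∈ W := W.max'_mem hWne
      set V := W.erase β with hV
      have hVcard : V.card = m + 2 := by
        rw [hV, Finset.card_erase_of_mem hβW, hW]
        omega

      have hVlt : ∀ x ∈ V, x < β := fun x hx =>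
        Finset.lt_max'_of_mem_erase_max' W hWne hx
      set V' : Finset (OT κ m) := (V.subtype (· < β)).image (e β) with hV'
      have hVsub : (V.subtype (· < β)).card = V.card := by
        rw [Finset.card_subtype, Finset.filter_true_of_mem hVlt]
      have hV'card : V'.card = m + 2 := by
        exact (Finset.card_image_of_injective _ (e β).injective).trans (hVsub.trans hVcard)
      obtain ⟨η, hηV', hηf⟩ := hfprop V' hV'card
      rw [hV'] at hηV'
      obtain ⟨ξs, hξsV, hξeq⟩ := Finset.mem_image.1 hηV'
      have hξV : ξs.1 ∈ V := (Finset.mem_subtype.1 hξsV)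
      have hξW : ξs.1 ∈ W := Finset.mem_of_mem_erase hξV
      have hξβ : ξs.1 ≠ β := Finset.ne_of_mem_erase hξV
      refine ⟨ξs.1, hξW, ?_⟩
      -- show ξ ∈ g (W.erase ξ)
      set U := W.erase ξs.1 with hU
      have hβU : β ∈ U := Finset.mem_erase.2 ⟨hξβ.symm, hβW⟩
      have hUne : U.Nonempty := ⟨β, hβU⟩
      have hUmax : U.max' hUne = β := by
        refine le_antisymm (Finset.max'_le _ _ _ fun x hx => ?_) (Finset.le_max' _ _ hβU)
        exact Finset.le_max' W x (Finset.mem_of_mem_erase hx)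
      have key : ∀ (U : Finset (OT κ (m+1))) (hne : U.Nonempty) (β₀)
          (_ : U.max' hne = β₀),
          g U = {x : OT κ (m+1) | ∃ hx : x < β₀,
            e β₀ ⟨x, hx⟩ ∈ f (((U.erase β₀).subtype (· < β₀)).image (e β₀))} := by
        intro U hne β₀ hmax
        subst hmax
        rw [hg]
        dsimp only
        rw [dif_pos hne]
      rw [key U hUne β hUmax]
      have hUerase : U.erase β = V.erase ξs.1 := by
        rw [hU, hV, Finset.erase_right_comm]
      have hsub : (U.erase β).subtype (· < β) = (V.subtype (· < β)).erase ξs := by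
        rw [hUerase]
        ext x
        simp only [Finset.mem_subtype, Finset.mem_erase, ne_eq, Subtype.ext_iff]
        exact ⟨fun ⟨h1, h2⟩ => Finset.mem_erase.2 ⟨fun h => h1 (congrArg Subtype.val h), Finset.mem_subtype.2 h2⟩,
          fun h => ⟨fun h' => (Finset.mem_erase.1 h).1 (Subtype.ext h'), Finset.mem_subtype.1 (Finset.mem_erase.1 h).2⟩⟩
      have himg : ((U.erase β).subtype (· < β)).image (e β) = V'.erase η := by
        rw [hsub, hV', ← hξeq]
        exact Finset.image_erase (e β).injective _ _
      refine ⟨ξs.2, ?_⟩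
      rw [himg]
      have heta : (⟨(ξs : OT κ (m+1)), ξs.2⟩ : Set.Iio β) = ξs := rfl
      rw [heta, hξeq]
      exact hηf


theorem le_iter (κ : Cardinal) (m : ℕ) : κ ≤ (Order.succ)^[m] κ := by
  induction m with
  | zero => exact le_rfl
  | succ m ih =>
    rw [Function.iterate_succ_apply']
    exact ih.trans (Order.le_succ _)

theorem freeset (κ : Cardinal) (hreg : κ.IsRegular) (hunc : ℵ₀ < κ) :
    ∀ (m : ℕ) (E : Type) (_ : DecidableEq E), (Order.succ)^[m] κ ≤ #E →
      ∀ g : Finset E → Set E, (∀ V, #(g V) < κ) →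
        ∃ F : Finset E, F.card = m + 1 ∧ ∀ ξ ∈ F, ξ ∉ g (F.erase ξ) := by
  intro m
  induction m with
  | zero =>
    intro E _inst hE g hg
    have h0 : #(g ∅) < #E := lt_of_lt_of_le (hg ∅) hE
    have : g ∅ ≠ Set.univ := by
      intro h
      rw [h] at h0
      simp at h0
    obtain ⟨ξ, hξ⟩ : ∃ ξ, ξ ∉ g ∅ := by
      by_contra hc
      push_neg at hc
      exact this (Set.eq_univ_of_forall hc)
    refine ⟨{ξ}, by simp, ?_⟩
    intro x hx
    rw [Finset.mem_singleton] at hx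
    subst hx
    simpa using hξ
  | succ m ih =>
    intro E _inst hE g hg
    set μ := (Order.succ)^[m] κ with hμdef
    have hμinf : ℵ₀ ≤ μ := (hunc.le).trans (le_iter κ m)
    have hμE : μ ≤ #E := le_trans (by
      rw [Function.iterate_succ_apply']
      exact Order.le_succ μ) hE
    obtain ⟨S₀, hS₀⟩ := Cardinal.le_mk_iff_exists_set.1 hμE
    set M := clos g S₀ with hM
    have hMle : #M ≤ μ := mk_clos_le g hμinf
      (fun U => (hg U).le.trans (le_iter κ m)) hS₀.le
    have hMge : μ ≤ #M := hS₀ ▸ mk_le_mk_of_subset (subset_clos g S₀)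
    have hMne : M ≠ Set.univ := by
      intro h
      have : #E ≤ μ := by
        have h2 : #↥M = #E := by rw [h, mk_univ]
        rw [← h2]
        exact hMle
      have h2 : (Order.succ)^[m+1] κ ≤ μ := hE.trans this
      rw [Function.iterate_succ_apply'] at h2
      exact absurd h2 (not_le.2 (Order.lt_succ_of_not_isMax (not_isMax μ)))
    obtain ⟨p, hp⟩ : ∃ p, p ∉ M := by
      by_contra hc
      push_neg at hc
      exact hMne (Set.eq_univ_of_forall hc)
    set g' : Finset ↥M → Set ↥M := fun V => {x | ↑x ∈ g (insert p (V.image Subtype.val))}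
      with hg'
    have hg'card : ∀ V, #(g' V) < κ := by
      intro V
      refine lt_of_le_of_lt (Cardinal.mk_le_of_injective
        (f := fun x : ↥(g' V) => (⟨x.1.1, x.2⟩ : ↥(g (insert p (V.image Subtype.val))))) ?_)
        (hg _)
      rintro ⟨⟨x, hxM⟩, hx⟩ ⟨⟨y, hyM⟩, hy⟩ hxy
      simp only [Subtype.mk.injEq] at hxy
      exact Subtype.ext (Subtype.ext hxy)
    obtain ⟨F', hF'card, hF'free⟩ := ih ↥M (Classical.decEq _) hMge g' hg'card
    have hpF : p ∉ F'.image Subtype.val := by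
      intro hmem
      obtain ⟨ζ, _, hζ⟩ := Finset.mem_image.1 hmem
      exact hp (hζ ▸ ζ.2)
    refine ⟨insert p (F'.image Subtype.val), ?_, ?_⟩
    · rw [Finset.card_insert_of_notMem hpF,
        Finset.card_image_of_injective _ Subtype.val_injective, hF'card]
    · intro ξ hξ
      rcases Finset.mem_insert.1 hξ with hξp | hξm
      · subst hξp
        rw [Finset.erase_insert hpF]
        intro hmem
        have hsub : ↑(F'.image Subtype.val) ⊆ M := by
          intro x hx
          obtain ⟨ζ, _, hζ⟩ := Finset.mem_image.1 hx
          exact hζ ▸ ζ.2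
        exact hp (clos_closed g hsub hmem)
      · obtain ⟨ζ, hζF', hζeq⟩ := Finset.mem_image.1 hξm
        subst hζeq
        have hpζ : p ≠ ↑ζ := fun h => hp (h ▸ ζ.2)
        rw [Finset.erase_insert_of_ne hpζ, ← Finset.image_erase Subtype.val_injective]
        intro hmem
        exact hF'free ζ hζF' (by simpa [hg'] using hmem)



variable {E : Type} (g : Finset E → Set E)

def SL : Type := {X : Set E // ∃ S : Finset E, X = clos g ↑S}

theorem SL.closed (X : SL g) : ∀ U : Finset E, ↑U ⊆ X.1 → g U ⊆ X.1 := by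
  obtain ⟨X, S, rfl⟩ := X
  intro U hU
  exact clos_closed g hU

instance : PartialOrder (SL g) :=
  PartialOrder.lift (fun X : SL g => X.1) (fun _ _ h => Subtype.ext h)

theorem SL.le_iff {X Y : SL g} : X ≤ Y ↔ X.1 ⊆ Y.1 := Iff.rfl

instance : SemilatticeSup (SL g) :=
  { (inferInstance : PartialOrder (SL g)) with
    sup := fun X Y => ⟨clos g (X.1 ∪ Y.1), by
      obtain ⟨S, hS⟩ := X.2
      obtain ⟨T, hT⟩ := Y.2
      classical
      refine ⟨S ∪ T, ?_⟩
      rw [hS, hT, Finset.coe_union, clos_idem_union]⟩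
    le_sup_left := fun X Y => (SL.le_iff g).2 (Set.subset_union_left.trans (subset_clos g _))
    le_sup_right := fun X Y => (SL.le_iff g).2 (Set.subset_union_right.trans (subset_clos g _))
    sup_le := fun X Y Z h1 h2 => (SL.le_iff g).2
      (clos_min g (SL.closed g Z) (Set.union_subset ((SL.le_iff g).1 h1) ((SL.le_iff g).1 h2))) }

instance : OrderBot (SL g) where
  bot := ⟨clos g ∅, ⟨∅, by rw [Finset.coe_empty]⟩⟩
  bot_le Z := (SL.le_iff g).2 (clos_min g (SL.closed g Z) (Set.empty_subset _))

theorem SL.sup_val (X Y : SL g) : (X ⊔ Y).1 = clos g (X.1 ∪ Y.1) := rfl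

theorem SL.bot_val : (⊥ : SL g).1 = clos g ∅ := rfl

theorem clos_eq_self_of_closed {S : Set E} (h : ∀ U : Finset E, ↑U ⊆ S → g U ⊆ S) :
    clos g S = S :=
  subset_antisymm (clos_min g h subset_rfl) (subset_clos g S)

theorem clos_empty (hg1 : ∀ U : Finset E, U.card ≤ 1 → g U = ∅) : clos g ∅ = ∅ := by
  apply clos_eq_self_of_closed
  intro U hU
  have : U = ∅ := Finset.coe_eq_empty.1 (subset_antisymm hU (Set.empty_subset _))
  rw [hg1 U (by simp [this])]

theorem clos_singleton (hg1 : ∀ U : Finset E, U.card ≤ 1 → g U = ∅) (ξ : E) :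
    clos g {ξ} = {ξ} := by
  apply clos_eq_self_of_closed
  intro U hU
  have hcard : U.card ≤ 1 := by
    by_contra hc
    push_neg at hc
    obtain ⟨a, ha, b, hb, hab⟩ := Finset.one_lt_card.1 hc
    have ha' : a = ξ := hU ha
    have hb' : b = ξ := hU hb
    exact hab (ha'.trans hb'.symm)
  rw [hg1 U hcard]
  exact Set.empty_subset _

/-- the singleton element -/
def SL.single (hg1 : ∀ U : Finset E, U.card ≤ 1 → g U = ∅) (ξ : E) : SL g := ⟨{ξ}, ⟨{ξ}, by rw [Finset.coe_singleton, clos_singleton g hg1]⟩⟩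

theorem SL.single_injective (hg1 : ∀ U : Finset E, U.card ≤ 1 → g U = ∅) :
    Function.Injective (SL.single g hg1) := by
  intro x y h
  have := congrArg Subtype.val h
  simpa [SL.single] using this

theorem SL.bot_val' (hg1 : ∀ U : Finset E, U.card ≤ 1 → g U = ∅) : (⊥ : SL g).1 = ∅ := by rw [SL.bot_val, clos_empty g hg1]

theorem SL.isAtom_single (hg1 : ∀ U : Finset E, U.card ≤ 1 → g U = ∅) (ξ : E) : IsAtom (SL.single g hg1 ξ) := by
  constructor
  · intro h
    have := congrArg Subtype.val h
    rw [SL.bot_val' g hg1] at this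
    simp [SL.single] at this
  · intro b hb
    obtain ⟨hble, hbne⟩ := lt_iff_le_and_ne.1 hb
    have hsub : b.1 ⊆ {ξ} := hble
    rcases Set.subset_singleton_iff_eq.1 hsub with h | h
    · exact Subtype.ext (h.trans (SL.bot_val' g hg1).symm)
    · exact absurd (Subtype.ext h : b = SL.single g hg1 ξ) hbne

theorem SL.single_le_iff (hg1 : ∀ U : Finset E, U.card ≤ 1 → g U = ∅) (ξ : E) (X : SL g) : SL.single g hg1 ξ ≤ X ↔ ξ ∈ X.1 := by
  rw [SL.le_iff g]
  constructor
  · intro h; exact h rfl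
  · intro h x hx
    have hx' : x = ξ := by simpa [SL.single] using hx
    exact hx' ▸ h

/-- every element is a finite join of atoms -/
theorem SL.atomistic (hg1 : ∀ U : Finset E, U.card ≤ 1 → g U = ∅) (x : SL g) :
    ∃ s : Finset (SL g), (∀ a ∈ s, IsAtom a) ∧ x = s.sup id := by
  classical
  obtain ⟨X, S, hS⟩ := x
  refine ⟨S.image (SL.single g hg1), ?_, ?_⟩
  · intro a ha
    obtain ⟨ξ, _, rfl⟩ := Finset.mem_image.1 ha
    exact SL.isAtom_single g hg1 ξ
  · apply le_antisymm
    · refine (SL.le_iff g).2 ?_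
      show X ⊆ _
      rw [hS]
      apply clos_min g (SL.closed g _)
      intro ξ hξ
      have hle : SL.single g hg1 ξ ≤ (S.image (SL.single g hg1)).sup id :=
        Finset.le_sup (f := id) (Finset.mem_image_of_mem _ hξ)
      exact (SL.single_le_iff g hg1 ξ _).1 hle
    · apply Finset.sup_le
      intro b hb
      obtain ⟨ξ, hξ, rfl⟩ := Finset.mem_image.1 hb
      show SL.single g hg1 ξ ≤ ⟨X, S, hS⟩
      refine (SL.single_le_iff g hg1 ξ _).2 ?_
      show ξ ∈ X
      rw [hS]
      exact subset_clos g _ hξ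



theorem SL.breadth_le [DecidableEq E] [DecidableEq (SL g)] {n : ℕ}
    (hprop : ∀ W : Finset E, W.card = n + 2 → ∃ ξ ∈ W, ξ ∈ g (W.erase ξ))
    (A : Finset (SL g)) (hA : A.card = n + 2) :
    ∃ a ∈ A, a ≤ (A.erase a).sup id := by
  classical
  by_contra hc
  push_neg at hc
  have hex : ∀ X ∈ A, ∃ t, t ∈ X.1 ∧ t ∉ ((A.erase X).sup id).1 := by
    intro X hX
    have h1 := hc X hX
    rw [SL.le_iff g] at h1
    exact Set.not_subset.1 h1
  choose t ht1 ht2 using hex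
  have hmemsup : ∀ (X : SL g) (Y : SL g) (hYA : Y ∈ A), Y ≠ X →
      t Y hYA ∈ ((A.erase X).sup id).1 := by
    intro X Y hYA hYX
    have hle : Y ≤ (A.erase X).sup id := Finset.le_sup (f := id) (Finset.mem_erase.2 ⟨hYX, hYA⟩)
    exact hle (ht1 Y hYA)
  set W := A.attach.image (fun X => t X.1 X.2) with hW
  have hWcard : W.card = n + 2 := by
    rw [hW, Finset.card_image_of_injOn, Finset.card_attach, hA]
    rintro ⟨X, hX⟩ - ⟨Y, hY⟩ - hEq
    dsimp only at hEq
    by_contra hne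
    have hXY : X ≠ Y := fun h => hne (Subtype.ext h)
    have hmem := hmemsup Y X hX hXY
    rw [hEq] at hmem
    exact ht2 Y hY hmem
  obtain ⟨ξ, hξW, hξg⟩ := hprop W hWcard
  obtain ⟨⟨X, hXA⟩, -, hXeq⟩ := Finset.mem_image.1 hξW
  have hsub : ↑(W.erase ξ) ⊆ ((A.erase X).sup id).1 := by
    intro y hy
    obtain ⟨hyne, hyW⟩ := Finset.mem_erase.1 hy
    obtain ⟨⟨Y, hYA⟩, -, hYeq⟩ := Finset.mem_image.1 hyW
    have hYX : Y ≠ X := by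
      intro h
      subst h
      exact hyne (hYeq.symm.trans hXeq)
    exact hYeq ▸ hmemsup X Y hYA hYX
  have hmem := SL.closed g ((A.erase X).sup id) (W.erase ξ) hsub hξg
  exact ht2 X hXA (hXeq ▸ hmem)

theorem SL.breadth_gt [DecidableEq E] [DecidableEq (SL g)] {n : ℕ}
    (hg1 : ∀ U : Finset E, U.card ≤ 1 → g U = ∅)
    {F : Finset E} (hFcard : F.card = n + 1)
    (hfree : ∀ ξ ∈ F, ξ ∉ clos g ↑(F.erase ξ)) :
    ¬ (∀ A : Finset (SL g), A.card = n + 1 → ∃ a ∈ A, a ≤ (A.erase a).sup id) := by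
  classical
  intro hall
  set A := F.image (SL.single g hg1) with hA
  have hAcard : A.card = n + 1 := by
    rw [hA, Finset.card_image_of_injective _ (SL.single_injective g hg1), hFcard]
  obtain ⟨a, haA, hale⟩ := hall A hAcard
  obtain ⟨ξ, hξF, rfl⟩ := Finset.mem_image.1 haA
  set z : SL g := ⟨clos g ↑(F.erase ξ), ⟨F.erase ξ, rfl⟩⟩ with hz
  have hsup_le : (A.erase (SL.single g hg1 ξ)).sup id ≤ z := by
    apply Finset.sup_le
    intro b hb
    obtain ⟨hbne, hbA⟩ := Finset.mem_erase.1 hb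
    obtain ⟨η, hηF, rfl⟩ := Finset.mem_image.1 hbA
    have hηξ : η ≠ ξ := fun h => hbne (by rw [h])
    show SL.single g hg1 η ≤ z
    rw [SL.single_le_iff g hg1]
    exact subset_clos g _ (by exact_mod_cast Finset.mem_erase.2 ⟨hηξ, hηF⟩)
  have : SL.single g hg1 ξ ≤ z := le_trans hale hsup_le
  rw [SL.single_le_iff g hg1] at this
  exact hfree ξ hξF this

theorem mk_finset_le'' (α : Type) : #(Finset α) ≤ max #α ℵ₀ := by
  by_cases hT : Finite α
  · have := Fintype.ofFinite α
    exact le_max_of_le_right mk_le_aleph0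
  · have : Infinite α := not_finite_iff_infinite.1 hT
    rw [mk_finset_of_infinite]
    exact le_max_left _ _


theorem SL.mk_val_lt {κ : Cardinal} (hreg : κ.IsRegular) (hunc : ℵ₀ < κ)
    (hgcard : ∀ U, #(g U) < κ) (x : SL g) : #x.1 < κ := by
  obtain ⟨X, S, rfl⟩ := x
  exact mk_clos_lt g hreg hunc hgcard ((mk_le_aleph0).trans_lt hunc)

theorem SL.mk_Iic_lt {κ : Cardinal} (hreg : κ.IsRegular) (hunc : ℵ₀ < κ)
    (hgcard : ∀ U, #(g U) < κ) (x : SL g) : #(Set.Iic x) < κ := by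
  classical
  have hxlt : #x.1 < κ := SL.mk_val_lt g hreg hunc hgcard x
  have hle : #(Set.Iic x) ≤ #(Finset ↥(x.1)) := by
    refine mk_le_of_surjective (f := fun T : Finset ↥(x.1) =>
      if h : clos g ↑(T.image Subtype.val) ⊆ x.1 then
        ⟨⟨clos g ↑(T.image Subtype.val), ⟨T.image Subtype.val, rfl⟩⟩, (SL.le_iff g).2 h⟩
      else ⟨⊥, Set.mem_Iic.2 bot_le⟩) ?_
    rintro ⟨⟨X, S, hS⟩, hle⟩
    have hXsub : X ⊆ x.1 := (SL.le_iff g).1 hle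
    have hSX : ↑S ⊆ X := hS ▸ subset_clos g (↑S)
    set T : Finset ↥(x.1) := S.subtype (· ∈ x.1) with hT
    have hTS : T.image Subtype.val = S := by
      ext a
      simp only [hT, Finset.mem_image, Finset.mem_subtype]
      constructor
      · rintro ⟨⟨b, hb⟩, hbS, rfl⟩
        exact hbS
      · intro ha
        exact ⟨⟨a, hXsub (hSX ha)⟩, ha, rfl⟩
    refine ⟨T, ?_⟩
    dsimp only
    have hcl : clos g ↑(T.image Subtype.val) = X := by rw [hTS, ← hS]
    rw [dif_pos (by rw [hcl]; exact hXsub)]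
    exact Subtype.ext (Subtype.ext hcl)
  refine lt_of_le_of_lt (hle.trans (mk_finset_le'' _)) (max_lt hxlt hunc)

end Stmt8


/-- For each regular uncountable cardinal κ and each positive integer n, there exists an
atomistic join-semilattice L with zero, of breadth exactly n+1 and cardinality κ⁺ⁿ, in which
every principal ideal has fewer than κ elements. -/
theorem stmt_8 (κ : Cardinal) (hreg : κ.IsRegular) (hunc : Cardinal.aleph0 < κ)
    (n : ℕ) (hn : 0 < n) :
    ∃ (L : Type) (_ : SemilatticeSup L) (_ : OrderBot L) (_ : DecidableEq L),
      (∀ x : L, ∃ s : Finset L, (∀ a ∈ s, IsAtom a) ∧ x = s.sup id) ∧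
      (∀ A : Finset L, A.card = n + 2 → ∃ a ∈ A, a ≤ (A.erase a).sup id) ∧
      ¬ (∀ A : Finset L, A.card = n + 1 → ∃ a ∈ A, a ≤ (A.erase a).sup id) ∧
      Cardinal.mk L = (Order.succ)^[n] κ ∧
      (∀ x : L, Cardinal.mk ↥(Set.Iic x) < κ) := by
  open Stmt8 Cardinal in
  obtain ⟨f₀, hf₀card, hf₀prop⟩ := kur κ hreg hunc n
  set g : Finset (OT κ n) → Set (OT κ n) := fun U => if U.card = n + 1 then f₀ U else ∅
    with hgdef
  have hgcard : ∀ U, #(g U) < κ := by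
    intro U
    rw [hgdef]
    dsimp only
    split_ifs
    · exact hf₀card U
    · simpa using aleph0_pos.trans hunc
  have hg1 : ∀ U : Finset (OT κ n), U.card ≤ 1 → g U = ∅ := by
    intro U hU
    rw [hgdef]
    dsimp only
    rw [if_neg (by omega)]
  have hprop : ∀ W : Finset (OT κ n), W.card = n + 2 → ∃ ξ ∈ W, ξ ∈ g (W.erase ξ) := by
    intro W hWc
    obtain ⟨ξ, hξ, hmem⟩ := hf₀prop W hWc
    refine ⟨ξ, hξ, ?_⟩
    rw [hgdef]
    dsimp only
    rw [if_pos (by rw [Finset.card_erase_of_mem hξ, hWc]; omega : (W.erase ξ).card = n + 1)]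
    exact hmem
  have hEcard : #(OT κ n) = (Order.succ)^[n] κ := mk_OT κ n
  obtain ⟨F, hFcard, hFfree⟩ := freeset κ hreg hunc n (OT κ n) inferInstance (le_of_eq hEcard.symm)
    (fun V => clos g ↑V)
    (fun V => mk_clos_lt g hreg hunc hgcard ((mk_le_aleph0).trans_lt hunc))
  letI dL : DecidableEq (SL g) := Classical.decEq _
  refine ⟨SL g, inferInstance, inferInstance, dL, ?_, ?_, ?_, ?_, ?_⟩
  · exact SL.atomistic g hg1
  · exact fun A hA => SL.breadth_le g hprop A hA
  · exact SL.breadth_gt g hg1 hFcard hFfree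
  · apply le_antisymm
    · have hsurj : Function.Surjective
          (fun S : Finset (OT κ n) => (⟨clos g ↑S, S, rfl⟩ : SL g)) := by
        rintro ⟨X, S, rfl⟩
        exact ⟨S, rfl⟩
      have h1 : #(SL g) ≤ #(Finset (OT κ n)) := mk_le_of_surjective hsurj
      have hinfE : Infinite (OT κ n) := by
        rw [Cardinal.infinite_iff, hEcard]
        exact hunc.le.trans (le_iter κ n)
      rw [mk_finset_of_infinite] at h1
      exact h1.trans (le_of_eq hEcard)
    · rw [← hEcard]
      exact mk_le_of_injective (SL.single_injective g hg1)
  · exact fun x => SL.mk_Iic_lt g hreg hunc hgcard x
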